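/- Let I ⊂ [0,1] be an interval and let f be a predictor such that for every v ∈ I and every group s ∈ [K], the conditional prediction law μ_{f|v,s} is supported in [−M, M], and the map v ↦ F_{f|v,s}(t) is L_cdf-Lipschitz on I uniformly in t ∈ ℝ. Define the pointwise unfairness U_v(f) := ∑_{s=1}^K w_s W₂²(μ_{f|v,s}, μ*_{f|v}), where μ*_{f|v} is the Wasserstein-2 barycenter of (μ_{f|v,s})_s with weights w ∈ Δ^{K−1}. Then v ↦ U_v(f) is Lipschitz on I with constant 16 M² L_cdf: |U_v(f) − U_{v'}(f)| ≤ 16 M² L_cdf |v − v'| for all v, v' ∈ I. -/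

import Mathlib

open MeasureTheory ProbabilityTheory Set

/-- Generalized (left-continuous) quantile function of a measure on ℝ. -/
noncomputable def quantile (μ : Measure ℝ) (u : ℝ) : ℝ :=
  sInf {x : ℝ | u ≤ cdf μ x}

/-- Squared Wasserstein-2 distance between measures on ℝ, via the quantile representation. -/
noncomputable def W2sq (μ ν : Measure ℝ) : ℝ :=
  ∫ u in Ioo (0:ℝ) 1, (quantile μ u - quantile ν u) ^ 2

/-- The one-dimensional Wasserstein-2 barycenter with weights `w`. -/
noncomputable def wassersteinBarycenter {K : ℕ} (w : Fin K → ℝ) (μ : Fin K → Measure ℝ) :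
    Measure ℝ :=
  Measure.map (fun u => ∑ s, w s * quantile (μ s) u) (volume.restrict (Ioo (0:ℝ) 1))

/-- Pointwise unfairness at level `v` of the family of conditional laws `μ v`. -/
noncomputable def pointwiseUnfairness {K : ℕ} (w : Fin K → ℝ)
    (μ : ℝ → Fin K → Measure ℝ) (v : ℝ) : ℝ :=
  ∑ s, w s * W2sq (μ v s) (wassersteinBarycenter w (μ v))

open scoped ENNReal

namespace UF

variable {M : ℝ} {μ : Measure ℝ}

lemma cdf_zero_of_lt [IsProbabilityMeasure μ] (hsupp : μ (Icc (-M) M)ᶜ = 0)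
    {x : ℝ} (hx : x < -M) : cdf μ x = 0 := by
  rw [cdf_eq_real, measureReal_def]
  have h0 : μ (Iic x) = 0 := by
    refine measure_mono_null (fun y hy => ?_) hsupp
    simp only [mem_compl_iff, mem_Icc, not_and_or, not_le]
    exact Or.inl (lt_of_le_of_lt hy hx)
  simp [h0]

lemma cdf_one_of_le [IsProbabilityMeasure μ] (hsupp : μ (Icc (-M) M)ᶜ = 0)
    {x : ℝ} (hx : M ≤ x) : cdf μ x = 1 := by
  rw [cdf_eq_real, measureReal_def]
  have h0 : μ (Ioi x) = 0 := by
    refine measure_mono_null (fun y hy => ?_) hsupp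
    simp only [mem_compl_iff, mem_Icc, not_and_or, not_le]
    exact Or.inr (lt_of_le_of_lt hx hy)
  have : μ (Iic x) = 1 := by
    have hc := measure_add_measure_compl (μ := μ) (measurableSet_Iic (a := x))
    rw [compl_Iic, h0, add_zero, measure_univ] at hc
    exact hc
  simp [this]

lemma bddBelow_quantileSet [IsProbabilityMeasure μ] (hsupp : μ (Icc (-M) M)ᶜ = 0)
    {u : ℝ} (hu : 0 < u) : BddBelow {x : ℝ | u ≤ cdf μ x} := by
  refine ⟨-M, fun x hx => ?_⟩
  by_contra hlt
  push_neg at hlt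
  have := cdf_zero_of_lt hsupp hlt
  have : u ≤ 0 := this ▸ hx
  linarith

lemma mem_quantileSet_M [IsProbabilityMeasure μ] (hsupp : μ (Icc (-M) M)ᶜ = 0)
    {u : ℝ} (hu1 : u ≤ 1) : M ∈ {x : ℝ | u ≤ cdf μ x} := by
  simp only [mem_setOf_eq, cdf_one_of_le hsupp le_rfl]
  exact hu1

lemma quantile_le_iff [IsProbabilityMeasure μ] (hsupp : μ (Icc (-M) M)ᶜ = 0)
    {u : ℝ} (hu : 0 < u) (hu1 : u ≤ 1) (x : ℝ) :
    quantile μ u ≤ x ↔ u ≤ cdf μ x := by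
  constructor
  · intro hQ
    have hne : {x : ℝ | u ≤ cdf μ x}.Nonempty := ⟨M, mem_quantileSet_M hsupp hu1⟩
    have htd : Filter.Tendsto (cdf μ) (nhdsWithin x (Ioi x)) (nhds (cdf μ x)) :=
      ((cdf μ).right_continuous x).mono Ioi_subset_Ici_self
    refine ge_of_tendsto htd ?_
    refine eventually_nhdsWithin_of_forall (fun y hy => ?_)
    obtain ⟨x', hx'S, hx'lt⟩ := exists_lt_of_csInf_lt hne (lt_of_le_of_lt hQ hy)
    exact le_trans hx'S (monotone_cdf μ hx'lt.le)
  · intro h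
    exact csInf_le (bddBelow_quantileSet hsupp hu) h

lemma quantile_mem_Icc [IsProbabilityMeasure μ] (hsupp : μ (Icc (-M) M)ᶜ = 0)
    {u : ℝ} (hu : 0 < u) (hu1 : u ≤ 1) : quantile μ u ∈ Icc (-M) M := by
  constructor
  · refine le_csInf ⟨M, mem_quantileSet_M hsupp hu1⟩ (fun x hx => ?_)
    by_contra hlt
    push_neg at hlt
    have h0 := cdf_zero_of_lt hsupp hlt
    have : u ≤ 0 := h0 ▸ hx
    linarith
  · exact csInf_le (bddBelow_quantileSet hsupp hu) (mem_quantileSet_M hsupp hu1)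

lemma quantile_mono [IsProbabilityMeasure μ] (hsupp : μ (Icc (-M) M)ᶜ = 0)
    {u u' : ℝ} (hu : 0 < u) (huu : u ≤ u') (hu1 : u' ≤ 1) :
    quantile μ u ≤ quantile μ u' := by
  refine csInf_le_csInf (bddBelow_quantileSet hsupp hu) ⟨M, mem_quantileSet_M hsupp hu1⟩ ?_
  intro x hx
  exact le_trans huu hx

lemma quantile_left [IsProbabilityMeasure μ] (hsupp : μ (Icc (-M) M)ᶜ = 0)
    {u y : ℝ} (hu : 0 < u) (hu1 : u ≤ 1) (hy : y < quantile μ u) :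
    ∃ u₀, 0 < u₀ ∧ u₀ < u ∧ y < quantile μ u₀ := by
  by_contra hcon
  push_neg at hcon
  set c := cdf μ y with hc
  have hcu : u ≤ c := by
    by_contra hlt
    push_neg at hlt
    set u₀ := (max c 0 + u) / 2 with hu₀
    have h1 : 0 < u₀ := by
      have : (0:ℝ) ≤ max c 0 := le_max_right _ _
      positivity
    have h2 : u₀ < u := by
      have : max c 0 < u := max_lt hlt hu
      simp only [hu₀]; linarith
    have h3 : c < u₀ := by
      have : c ≤ max c 0 := le_max_left _ _
      have := hlt
      simp only [hu₀]; linarith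
    have := hcon u₀ h1 h2
    rw [quantile_le_iff hsupp h1 (le_trans h2.le hu1) y] at this
    linarith
  have : quantile μ u ≤ y := (quantile_le_iff hsupp hu hu1 y).2 hcu
  linarith

end UF

namespace UF

noncomputable def qext (M : ℝ) (μ : Measure ℝ) (u : ℝ) : ℝ :=
  if u ≤ 0 then -M else quantile μ (min u 1)

variable {M : ℝ} {μ ν : Measure ℝ}

lemma qext_eq {u : ℝ} (hu : 0 < u) (hu1 : u ≤ 1) : qext M μ u = quantile μ u := by
  simp [qext, not_le.2 hu, min_eq_left hu1]

lemma qext_mem_Icc [IsProbabilityMeasure μ] (hsupp : μ (Icc (-M) M)ᶜ = 0) (hM : 0 < M)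
    (u : ℝ) : qext M μ u ∈ Icc (-M) M := by
  unfold qext
  split_ifs with h
  · exact ⟨le_rfl, by linarith⟩
  · push_neg at h
    exact quantile_mem_Icc hsupp (lt_min h one_pos) (min_le_right _ _)

lemma qext_monotone [IsProbabilityMeasure μ] (hsupp : μ (Icc (-M) M)ᶜ = 0) (hM : 0 < M) :
    Monotone (qext M μ) := by
  intro u u' huu
  by_cases h : u ≤ 0
  · by_cases h' : u' ≤ 0
    · simp [qext, h, h']
    · push_neg at h'
      rw [qext, if_pos h, qext, if_neg (not_le.2 h')]
      exact (quantile_mem_Icc hsupp (lt_min h' one_pos) (min_le_right _ _)).1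
  · push_neg at h
    have h' : ¬ u' ≤ 0 := not_le.2 (lt_of_lt_of_le h huu)
    rw [qext, if_neg (not_le.2 h), qext, if_neg h']
    exact quantile_mono hsupp (lt_min h one_pos) (min_le_min huu le_rfl) (min_le_right _ _)

lemma qext_measurable [IsProbabilityMeasure μ] (hsupp : μ (Icc (-M) M)ᶜ = 0) (hM : 0 < M) :
    Measurable (qext M μ) :=
  (qext_monotone hsupp hM).measurable

/-- Key inequality: the L¹ distance between quantile functions is bounded by
`2 M` times a uniform bound on the cdf difference. -/
lemma integral_abs_quantile_sub_le [IsProbabilityMeasure μ] [IsProbabilityMeasure ν]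
    (hsuppμ : μ (Icc (-M) M)ᶜ = 0) (hsuppν : ν (Icc (-M) M)ᶜ = 0) (hM : 0 < M)
    {L' : ℝ} (hL' : 0 ≤ L') (hcdf : ∀ x, |cdf μ x - cdf ν x| ≤ L') :
    ∫ u in Ioo (0:ℝ) 1, |quantile μ u - quantile ν u| ≤ 2 * M * L' := by
  set A : Set ℝ := Ioo (0:ℝ) 1 with hA
  set B : Set ℝ := Icc (-M) M with hB
  set S : Set (ℝ × ℝ) := {p : ℝ × ℝ |
    (qext M μ p.1 ≤ p.2 ∧ p.2 < qext M ν p.1) ∨ (qext M ν p.1 ≤ p.2 ∧ p.2 < qext M μ p.1)}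
    with hS
  have hSm : MeasurableSet S := by
    apply MeasurableSet.union
    · exact (measurableSet_le ((qext_measurable hsuppμ hM).comp measurable_fst) measurable_snd).inter
        (measurableSet_lt measurable_snd ((qext_measurable hsuppν hM).comp measurable_fst))
    · exact (measurableSet_le ((qext_measurable hsuppν hM).comp measurable_fst) measurable_snd).inter
        (measurableSet_lt measurable_snd ((qext_measurable hsuppμ hM).comp measurable_fst))
  have hcong : ∫ u in A, |quantile μ u - quantile ν u| = ∫ u in A, |qext M μ u - qext M ν u| := by
    refine setIntegral_congr_fun measurableSet_Ioo (fun u hu => ?_)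
    rw [qext_eq hu.1 hu.2.le, qext_eq hu.1 hu.2.le]
  rw [hcong]
  have hmeas : Measurable (fun u => |qext M μ u - qext M ν u|) :=
    ((qext_measurable hsuppμ hM).sub (qext_measurable hsuppν hM)).abs
  rw [MeasureTheory.integral_eq_lintegral_of_nonneg_ae
    (Filter.Eventually.of_forall (fun u => abs_nonneg _)) hmeas.aestronglyMeasurable]
  refine ENNReal.toReal_le_of_le_ofReal (by positivity) ?_
  have hpt : ∀ u ∈ A, ENNReal.ofReal |qext M μ u - qext M ν u|
      = ∫⁻ x in B, S.indicator (1 : ℝ × ℝ → ℝ≥0∞) (u, x) := by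
    intro u _
    have hμI := qext_mem_Icc hsuppμ hM u
    have hνI := qext_mem_Icc hsuppν hM u
    have hrw : (fun x => S.indicator (1 : ℝ × ℝ → ℝ≥0∞) (u, x))
        = ((Prod.mk u ⁻¹' S).indicator (1 : ℝ → ℝ≥0∞)) := by
      ext x; by_cases h : (u, x) ∈ S <;> simp [Set.indicator_apply, h]
    calc ENNReal.ofReal |qext M μ u - qext M ν u|
        = volume ((Prod.mk u ⁻¹' S) ∩ B) := by
          have hsec : Prod.mk u ⁻¹' S
              = Ico (qext M μ u) (qext M ν u) ∪ Ico (qext M ν u) (qext M μ u) := by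
            ext x
            simp only [hS, mem_preimage, mem_setOf_eq, mem_union, mem_Ico]
          rcases le_total (qext M μ u) (qext M ν u) with hle | hle
          · have h2 : Ico (qext M ν u) (qext M μ u) = ∅ := Ico_eq_empty (by simp; linarith)
            have h3 : Ico (qext M μ u) (qext M ν u) ⊆ B := fun x hx =>
              ⟨le_trans hμI.1 hx.1, le_trans hx.2.le hνI.2⟩
            rw [hsec, h2, union_empty, inter_eq_self_of_subset_left h3, Real.volume_Ico,
              abs_sub_comm, abs_of_nonneg (by linarith)]
          · have h2 : Ico (qext M μ u) (qext M ν u) = ∅ := Ico_eq_empty (by simp; linarith)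
            have h3 : Ico (qext M ν u) (qext M μ u) ⊆ B := fun x hx =>
              ⟨le_trans hνI.1 hx.1, le_trans hx.2.le hμI.2⟩
            rw [hsec, h2, empty_union, inter_eq_self_of_subset_left h3, Real.volume_Ico,
              abs_of_nonneg (by linarith)]
      _ = ∫⁻ x in B, (Prod.mk u ⁻¹' S).indicator (1 : ℝ → ℝ≥0∞) x := by
          rw [lintegral_indicator_one (hSm.preimage measurable_prodMk_left),
            Measure.restrict_apply (hSm.preimage measurable_prodMk_left)]
      _ = ∫⁻ x in B, S.indicator (1 : ℝ × ℝ → ℝ≥0∞) (u, x) := by rw [← hrw]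
  calc ∫⁻ u in A, ENNReal.ofReal |qext M μ u - qext M ν u|
      = ∫⁻ u in A, ∫⁻ x in B, S.indicator (1 : ℝ × ℝ → ℝ≥0∞) (u, x) := by
        exact setLIntegral_congr_fun_ae measurableSet_Ioo (Filter.Eventually.of_forall hpt)
    _ = ∫⁻ x in B, ∫⁻ u in A, S.indicator (1 : ℝ × ℝ → ℝ≥0∞) (u, x) := by
        refine lintegral_lintegral_swap ?_
        exact (measurable_one.indicator hSm).aemeasurable
    _ ≤ ∫⁻ x in B, ENNReal.ofReal L' := by
        refine setLIntegral_mono' measurableSet_Icc (fun x _ => ?_)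
        have hrw : (fun u => S.indicator (1 : ℝ × ℝ → ℝ≥0∞) (u, x))
            = (((fun u => (u, x)) ⁻¹' S).indicator (1 : ℝ → ℝ≥0∞)) := by
          ext u; by_cases h : (u, x) ∈ S <;> simp [Set.indicator_apply, h]
        rw [hrw, lintegral_indicator_one (hSm.preimage measurable_prodMk_right),
          Measure.restrict_apply (hSm.preimage measurable_prodMk_right)]
        have hsub : ((fun u => (u, x)) ⁻¹' S) ∩ A
            ⊆ Ioc (cdf ν x) (cdf μ x) ∪ Ioc (cdf μ x) (cdf ν x) := by
          intro u hu
          obtain ⟨huS, huA⟩ := hu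
          have h1 : qext M μ u = quantile μ u := qext_eq huA.1 huA.2.le
          have h2 : qext M ν u = quantile ν u := qext_eq huA.1 huA.2.le
          simp only [hS, mem_preimage, mem_setOf_eq, h1, h2] at huS
          rcases huS with ⟨ha, hb⟩ | ⟨ha, hb⟩
          · left
            constructor
            · by_contra hle
              push_neg at hle
              exact absurd ((quantile_le_iff hsuppν huA.1 huA.2.le x).2 hle) (not_le.2 hb)
            · exact (quantile_le_iff hsuppμ huA.1 huA.2.le x).1 ha
          · right
            constructor
            · by_contra hle
              push_neg at hle
              exact absurd ((quantile_le_iff hsuppμ huA.1 huA.2.le x).2 hle) (not_le.2 hb)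
            · exact (quantile_le_iff hsuppν huA.1 huA.2.le x).1 ha
        refine le_trans (measure_mono hsub) ?_
        rcases le_total (cdf μ x) (cdf ν x) with hle | hle
        · have h2 : Ioc (cdf ν x) (cdf μ x) = ∅ := Ioc_eq_empty (by simp; linarith)
          rw [h2, empty_union, Real.volume_Ioc]
          refine ENNReal.ofReal_le_ofReal (le_trans ?_ (hcdf x))
          rw [abs_sub_comm]
          exact le_abs_self _
        · have h2 : Ioc (cdf μ x) (cdf ν x) = ∅ := Ioc_eq_empty (by simp; linarith)
          rw [h2, union_empty, Real.volume_Ioc]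
          exact ENNReal.ofReal_le_ofReal (le_trans (le_abs_self _) (hcdf x))
    _ = ENNReal.ofReal L' * volume B := setLIntegral_const B (ENNReal.ofReal L')
    _ ≤ ENNReal.ofReal (2 * M * L') := by
        have hvB : volume B = ENNReal.ofReal (2 * M) := by
          rw [hB, Real.volume_Icc]; ring_nf
        rw [hvB, ← ENNReal.ofReal_mul hL']
        exact ENNReal.ofReal_le_ofReal (by ring_nf; exact le_rfl)

end UF

namespace UF

section Bary

variable {K : ℕ} {M : ℝ} {w : Fin K → ℝ} {μs : Fin K → Measure ℝ}
variable (hw : ∀ s, 0 ≤ w s) (hw1 : ∑ s, w s = 1)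
variable (hprob : ∀ s, IsProbabilityMeasure (μs s))
variable (hsupp : ∀ s, μs s (Icc (-M) M)ᶜ = 0) (hM : 0 < M)

include hw hprob hsupp hM in
lemma Gext_monotone : Monotone (fun u => ∑ s, w s * qext M (μs s) u) := by
  intro u u' huu
  refine Finset.sum_le_sum (fun s _ => ?_)
  haveI := hprob s
  exact mul_le_mul_of_nonneg_left (qext_monotone (hsupp s) hM huu) (hw s)

include hprob hsupp hM in
lemma Gext_measurable : Measurable (fun u => ∑ s, w s * qext M (μs s) u) := by
  refine Finset.measurable_sum _ (fun s _ => ?_)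
  haveI := hprob s
  exact (qext_measurable (hsupp s) hM).const_mul (w s)

include hw hw1 hprob hsupp hM in
lemma Gext_mem_Icc (u : ℝ) : (∑ s, w s * qext M (μs s) u) ∈ Icc (-M) M := by
  constructor
  · calc -M = ∑ s, w s * (-M) := by rw [← Finset.sum_mul, hw1, one_mul]
      _ ≤ ∑ s, w s * qext M (μs s) u := by
          refine Finset.sum_le_sum (fun s _ => ?_)
          haveI := hprob s
          exact mul_le_mul_of_nonneg_left (qext_mem_Icc (hsupp s) hM u).1 (hw s)
  · calc (∑ s, w s * qext M (μs s) u) ≤ ∑ s, w s * M := by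
          refine Finset.sum_le_sum (fun s _ => ?_)
          haveI := hprob s
          exact mul_le_mul_of_nonneg_left (qext_mem_Icc (hsupp s) hM u).2 (hw s)
      _ = M := by rw [← Finset.sum_mul, hw1, one_mul]

include hprob hsupp hM in
lemma bary_map_eq : wassersteinBarycenter w μs
    = Measure.map (fun u => ∑ s, w s * qext M (μs s) u) (volume.restrict (Ioo (0:ℝ) 1)) := by
  unfold wassersteinBarycenter
  refine Measure.map_congr ?_
  filter_upwards [self_mem_ae_restrict measurableSet_Ioo] with u hu
  refine Finset.sum_congr rfl (fun s _ => ?_)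
  haveI := hprob s
  rw [qext_eq hu.1 hu.2.le]

instance : IsProbabilityMeasure (volume.restrict (Ioo (0:ℝ) 1)) := by
  constructor
  simp [Real.volume_Ioo]

include hprob hsupp hM in
lemma bary_prob : IsProbabilityMeasure (wassersteinBarycenter w μs) := by
  rw [bary_map_eq hprob hsupp hM]
  exact Measure.isProbabilityMeasure_map (Gext_measurable hprob hsupp hM).aemeasurable

include hw hw1 hprob hsupp hM in
lemma bary_supp : (wassersteinBarycenter w μs) (Icc (-M) M)ᶜ = 0 := by
  rw [bary_map_eq hprob hsupp hM,
    Measure.map_apply (Gext_measurable hprob hsupp hM) measurableSet_Icc.compl]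
  have : (fun u => ∑ s, w s * qext M (μs s) u) ⁻¹' (Icc (-M) M)ᶜ = ∅ := by
    refine eq_empty_iff_forall_notMem.2 (fun u hu => ?_)
    exact hu (Gext_mem_Icc hw hw1 hprob hsupp hM u)
  rw [this]
  simp

include hw hw1 hprob hsupp hM in
lemma bary_cdf (x : ℝ) : cdf (wassersteinBarycenter w μs) x
    = (volume ({u : ℝ | (∑ s, w s * qext M (μs s) u) ≤ x} ∩ Ioo 0 1)).toReal := by
  haveI := bary_prob hprob hsupp hM (w := w)
  rw [cdf_eq_real, measureReal_def, bary_map_eq hprob hsupp hM,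
    Measure.map_apply (Gext_measurable hprob hsupp hM) measurableSet_Iic,
    Measure.restrict_apply ((Gext_measurable hprob hsupp hM) measurableSet_Iic)]
  rfl

include hw hw1 hprob hsupp hM in
lemma G_left_approx {u x : ℝ} (hu : 0 < u) (hu1 : u ≤ 1)
    (hx : x < ∑ s, w s * quantile (μs s) u) :
    ∃ u₀, 0 < u₀ ∧ u₀ < u ∧ x < ∑ s, w s * quantile (μs s) u₀ := by
  rcases Nat.eq_zero_or_pos K with hK | hK
  · exfalso
    subst hK
    simp at hw1
  haveI : Nonempty (Fin K) := ⟨⟨0, hK⟩⟩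
  set G : ℝ → ℝ := fun u' => ∑ s, w s * quantile (μs s) u' with hG
  set ε := (G u - x) / 2 with hε
  have hεpos : 0 < ε := by rw [hε]; simp only [hG]; linarith
  have hchoice : ∀ s, ∃ c, 0 < c ∧ c < u ∧ quantile (μs s) u - ε < quantile (μs s) c := by
    intro s
    haveI := hprob s
    obtain ⟨u₀, h1, h2, h3⟩ := quantile_left (hsupp s) hu hu1
      (show quantile (μs s) u - ε < quantile (μs s) u by linarith)
    exact ⟨u₀, h1, h2, h3⟩
  choose c hc1 hc2 hc3 using hchoice
  obtain ⟨s₀, _, hs₀⟩ := Finset.exists_mem_eq_sup' Finset.univ_nonempty c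
  refine ⟨Finset.univ.sup' Finset.univ_nonempty c, ?_, ?_, ?_⟩
  · rw [hs₀]; exact hc1 s₀
  · rw [hs₀]; exact hc2 s₀
  · have hle1 : Finset.univ.sup' Finset.univ_nonempty c ≤ 1 := by
      rw [hs₀]; exact le_trans (hc2 s₀).le hu1
    have hge : ∀ s, quantile (μs s) u - ε ≤ quantile (μs s) (Finset.univ.sup' Finset.univ_nonempty c) := by
      intro s
      haveI := hprob s
      refine le_trans (hc3 s).le (quantile_mono (hsupp s) (hc1 s) ?_ hle1)
      exact Finset.le_sup' c (Finset.mem_univ s)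
    calc x = G u - 2 * ε := by rw [hε]; ring
      _ < G u - ε := by linarith
      _ = ∑ s, w s * (quantile (μs s) u - ε) := by
          simp only [hG, mul_sub, Finset.sum_sub_distrib, ← Finset.sum_mul, hw1, one_mul]
      _ ≤ ∑ s, w s * quantile (μs s) (Finset.univ.sup' Finset.univ_nonempty c) :=
          Finset.sum_le_sum (fun s _ => mul_le_mul_of_nonneg_left (hge s) (hw s))

include hw hw1 hprob hsupp hM in
lemma quantile_bary_eq {u : ℝ} (hu : u ∈ Ioo (0:ℝ) 1) :
    quantile (wassersteinBarycenter w μs) u = ∑ s, w s * quantile (μs s) u := by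
  haveI := bary_prob hprob hsupp hM (w := w)
  have hbsupp := bary_supp hw hw1 hprob hsupp hM
  apply le_antisymm
  · rw [quantile_le_iff hbsupp hu.1 hu.2.le, bary_cdf hw hw1 hprob hsupp hM]
    have hGx : (∑ s, w s * quantile (μs s) u) = ∑ s, w s * qext M (μs s) u := by
      refine Finset.sum_congr rfl (fun s _ => ?_)
      haveI := hprob s
      rw [qext_eq hu.1 hu.2.le]
    rw [hGx]
    have hsub : Ioo 0 u ⊆ {u' : ℝ | (∑ s, w s * qext M (μs s) u') ≤ ∑ s, w s * qext M (μs s) u}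
        ∩ Ioo 0 1 := fun u' hu' =>
      ⟨Gext_monotone hw hprob hsupp hM hu'.2.le, ⟨hu'.1, lt_trans hu'.2 hu.2⟩⟩
    have hmono : volume (Ioo 0 u) ≤ volume ({u' : ℝ |
        (∑ s, w s * qext M (μs s) u') ≤ ∑ s, w s * qext M (μs s) u} ∩ Ioo 0 1) :=
      measure_mono hsub
    rw [Real.volume_Ioo, sub_zero] at hmono
    have hfin : volume ({u' : ℝ | (∑ s, w s * qext M (μs s) u') ≤ ∑ s, w s * qext M (μs s) u}
        ∩ Ioo 0 1) ≠ ⊤ := by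
      refine ne_of_lt (lt_of_le_of_lt (measure_mono inter_subset_right) ?_)
      rw [Real.volume_Ioo]
      exact ENNReal.ofReal_lt_top
    exact (ENNReal.ofReal_le_iff_le_toReal hfin).1 hmono
  · unfold quantile
    refine le_csInf ⟨M, mem_quantileSet_M hbsupp hu.2.le⟩ (fun x hx => ?_)
    by_contra hlt
    push_neg at hlt
    obtain ⟨u₀, h1, h2, h3⟩ := G_left_approx hw hw1 hprob hsupp hM hu.1 hu.2.le hlt
    have hGu₀ : (∑ s, w s * quantile (μs s) u₀) = ∑ s, w s * qext M (μs s) u₀ := by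
      refine Finset.sum_congr rfl (fun s _ => ?_)
      haveI := hprob s
      rw [qext_eq h1 (le_of_lt (lt_trans h2 hu.2))]
    have hsub : {u' : ℝ | (∑ s, w s * qext M (μs s) u') ≤ x} ∩ Ioo 0 1 ⊆ Ioc 0 u₀ := by
      rintro u' ⟨hle, hA⟩
      refine ⟨hA.1, ?_⟩
      by_contra hgt
      push_neg at hgt
      have hmono : (∑ s, w s * qext M (μs s) u₀) ≤ ∑ s, w s * qext M (μs s) u' :=
        Gext_monotone hw hprob hsupp hM (le_of_lt hgt)
      simp only [mem_setOf_eq] at hle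
      rw [← hGu₀] at hmono
      linarith
    have hmeas : volume ({u' : ℝ | (∑ s, w s * qext M (μs s) u') ≤ x} ∩ Ioo 0 1)
        ≤ volume (Ioc 0 u₀) := measure_mono hsub
    rw [Real.volume_Ioc, sub_zero] at hmeas
    have hx' := hx
    simp only [mem_setOf_eq, bary_cdf hw hw1 hprob hsupp hM] at hx'
    have : (volume ({u' : ℝ | (∑ s, w s * qext M (μs s) u') ≤ x} ∩ Ioo 0 1)).toReal ≤ u₀ :=
      ENNReal.toReal_le_of_le_ofReal h1.le hmeas
    linarith

end Bary

end UF


/-- Lipschitz continuity of the unfairness: if the conditional prediction laws are supported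
in `[−M, M]` and their c.d.f.s are `L_cdf`-Lipschitz in `v` on the interval `I ⊆ [0,1]`
uniformly in `t`, then `v ↦ U_v(f)` is `16 M² L_cdf`-Lipschitz on `I`. -/
theorem unfairness_lipschitz {K : ℕ} (w : Fin K → ℝ)
    (hw : ∀ s, 0 ≤ w s) (hw1 : ∑ s, w s = 1)
    (M Lcdf : ℝ) (hM : 0 < M) (hLcdf : 0 ≤ Lcdf)
    (I : Set ℝ) (hI : I ⊆ Icc (0:ℝ) 1) (hIconn : I.OrdConnected)
    (μ : ℝ → Fin K → Measure ℝ)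
    (hprob : ∀ v ∈ I, ∀ s, IsProbabilityMeasure (μ v s))
    (hsupp : ∀ v ∈ I, ∀ s, μ v s (Icc (-M) M)ᶜ = 0)
    (hlip : ∀ s, ∀ t : ℝ, ∀ v ∈ I, ∀ v' ∈ I,
      |cdf (μ v s) t - cdf (μ v' s) t| ≤ Lcdf * |v - v'|) :
    ∀ v ∈ I, ∀ v' ∈ I,
      |pointwiseUnfairness w μ v - pointwiseUnfairness w μ v'| ≤
        16 * M ^ 2 * Lcdf * |v - v'| := by
  intro v hv v' hv'
  -- unfold the unfairness using the barycenter quantile identity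
  have hU : ∀ z ∈ I, pointwiseUnfairness w μ z
      = ∑ s, w s * ∫ u in Ioo (0:ℝ) 1,
          (quantile (μ z s) u - ∑ t, w t * quantile (μ z t) u) ^ 2 := by
    intro z hz
    unfold pointwiseUnfairness W2sq
    refine Finset.sum_congr rfl (fun s _ => ?_)
    congr 1
    refine setIntegral_congr_fun measurableSet_Ioo (fun u hu => ?_)
    rw [UF.quantile_bary_eq hw hw1 (hprob z hz) (hsupp z hz) hM hu]
  -- measurability and boundedness of the quantile functions
  have hQsm : ∀ z ∈ I, ∀ s, AEStronglyMeasurable (fun u => quantile (μ z s) u)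
      (volume.restrict (Ioo (0:ℝ) 1)) := by
    intro z hz s
    haveI := hprob z hz s
    refine (UF.qext_measurable (hsupp z hz s) hM).aestronglyMeasurable.congr ?_
    filter_upwards [self_mem_ae_restrict measurableSet_Ioo] with u hu
    exact UF.qext_eq hu.1 hu.2.le
  have hQbd : ∀ z ∈ I, ∀ s, ∀ u ∈ Ioo (0:ℝ) 1, |quantile (μ z s) u| ≤ M := by
    intro z hz s u hu
    haveI := hprob z hz s
    have := UF.quantile_mem_Icc (hsupp z hz s) hu.1 hu.2.le
    rw [abs_le]
    exact ⟨this.1, this.2⟩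
  have hGsm : ∀ z ∈ I, AEStronglyMeasurable (fun u => ∑ t, w t * quantile (μ z t) u)
      (volume.restrict (Ioo (0:ℝ) 1)) := by
    intro z hz
    refine AEStronglyMeasurable.congr
      ((UF.Gext_measurable (w := w) (hprob z hz) (hsupp z hz) hM).aestronglyMeasurable) ?_
    filter_upwards [self_mem_ae_restrict measurableSet_Ioo] with u hu
    refine Finset.sum_congr rfl (fun t _ => ?_)
    haveI := hprob z hz t
    rw [UF.qext_eq hu.1 hu.2.le]
  have hGbd : ∀ z ∈ I, ∀ u ∈ Ioo (0:ℝ) 1, |∑ t, w t * quantile (μ z t) u| ≤ M := by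
    intro z hz u hu
    have hEq : (∑ t, w t * quantile (μ z t) u) = ∑ t, w t * UF.qext M (μ z t) u := by
      refine Finset.sum_congr rfl (fun t _ => ?_)
      haveI := hprob z hz t
      rw [UF.qext_eq hu.1 hu.2.le]
    rw [hEq, abs_le]
    have := UF.Gext_mem_Icc hw hw1 (hprob z hz) (hsupp z hz) hM u
    exact ⟨this.1, this.2⟩
  -- integrability helper
  have hint : ∀ (f : ℝ → ℝ), AEStronglyMeasurable f (volume.restrict (Ioo (0:ℝ) 1)) →
      ∀ C : ℝ, (∀ u ∈ Ioo (0:ℝ) 1, |f u| ≤ C) → IntegrableOn f (Ioo (0:ℝ) 1) := by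
    intro f hf C hC
    refine Integrable.mono' (integrable_const C) hf ?_
    filter_upwards [self_mem_ae_restrict measurableSet_Ioo] with u hu
    simpa [Real.norm_eq_abs] using hC u hu
  set c : ℝ := 2 * M * (Lcdf * |v - v'|) with hc
  have hc0 : 0 ≤ c := by positivity
  -- L¹ bounds on the quantile differences
  have hD : ∀ s, ∫ u in Ioo (0:ℝ) 1, |quantile (μ v s) u - quantile (μ v' s) u| ≤ c := by
    intro s
    haveI := hprob v hv s
    haveI := hprob v' hv' s
    exact UF.integral_abs_quantile_sub_le (hsupp v hv s) (hsupp v' hv' s) hM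
      (by positivity) (fun x => hlip s x v hv v' hv')
  have hQint : ∀ t, IntegrableOn
      (fun u => |quantile (μ v t) u - quantile (μ v' t) u|) (Ioo (0:ℝ) 1) := by
    intro t
    refine (hint _ ((hQsm v hv t).sub (hQsm v' hv' t)) (2 * M) (fun u hu => ?_)).abs
    calc |quantile (μ v t) u - quantile (μ v' t) u|
        ≤ |quantile (μ v t) u| + |quantile (μ v' t) u| := abs_sub _ _
      _ ≤ 2 * M := by linarith [hQbd v hv t u hu, hQbd v' hv' t u hu]
  have hGint : IntegrableOn
      (fun u => |(∑ t, w t * quantile (μ v t) u) - ∑ t, w t * quantile (μ v' t) u|)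
      (Ioo (0:ℝ) 1) := by
    refine (hint _ ((hGsm v hv).sub (hGsm v' hv')) (2 * M) (fun u hu => ?_)).abs
    calc |(∑ t, w t * quantile (μ v t) u) - ∑ t, w t * quantile (μ v' t) u|
        ≤ |∑ t, w t * quantile (μ v t) u| + |∑ t, w t * quantile (μ v' t) u| := abs_sub _ _
      _ ≤ 2 * M := by linarith [hGbd v hv u hu, hGbd v' hv' u hu]
  have hE : ∫ u in Ioo (0:ℝ) 1,
      |(∑ t, w t * quantile (μ v t) u) - ∑ t, w t * quantile (μ v' t) u| ≤ c := by
    have step1 : ∫ u in Ioo (0:ℝ) 1,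
        |(∑ t, w t * quantile (μ v t) u) - ∑ t, w t * quantile (μ v' t) u|
        ≤ ∫ u in Ioo (0:ℝ) 1, ∑ t, w t * |quantile (μ v t) u - quantile (μ v' t) u| := by
      refine setIntegral_mono_on hGint
        (integrable_finset_sum _ (fun t _ => (hQint t).const_mul (w t)))
        measurableSet_Ioo (fun u _ => ?_)
      calc |(∑ t, w t * quantile (μ v t) u) - ∑ t, w t * quantile (μ v' t) u|
          = |∑ t, w t * (quantile (μ v t) u - quantile (μ v' t) u)| := by
            rw [← Finset.sum_sub_distrib]
            congr 1
            exact Finset.sum_congr rfl (fun t _ => by ring)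
        _ ≤ ∑ t, |w t * (quantile (μ v t) u - quantile (μ v' t) u)| :=
            Finset.abs_sum_le_sum_abs _ _
        _ = ∑ t, w t * |quantile (μ v t) u - quantile (μ v' t) u| := by
            refine Finset.sum_congr rfl (fun t _ => ?_)
            rw [abs_mul, abs_of_nonneg (hw t)]
    have step2 : ∫ u in Ioo (0:ℝ) 1, ∑ t, w t * |quantile (μ v t) u - quantile (μ v' t) u|
        = ∑ t, w t * ∫ u in Ioo (0:ℝ) 1, |quantile (μ v t) u - quantile (μ v' t) u| := by
      rw [integral_finset_sum _ (fun t _ => (hQint t).const_mul (w t))]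
      exact Finset.sum_congr rfl (fun t _ => integral_const_mul _ _)
    have step3 : (∑ t, w t * ∫ u in Ioo (0:ℝ) 1,
        |quantile (μ v t) u - quantile (μ v' t) u|) ≤ ∑ t, w t * c :=
      Finset.sum_le_sum (fun t _ => mul_le_mul_of_nonneg_left (hD t) (hw t))
    have step4 : (∑ t, w t * c) = c := by rw [← Finset.sum_mul, hw1, one_mul]
    linarith [step1, step2 ▸ step1]
  -- per-group estimate
  have hterm : ∀ s,
      |(∫ u in Ioo (0:ℝ) 1, (quantile (μ v s) u - ∑ t, w t * quantile (μ v t) u) ^ 2)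
        - ∫ u in Ioo (0:ℝ) 1, (quantile (μ v' s) u - ∑ t, w t * quantile (μ v' t) u) ^ 2|
      ≤ 8 * M * c := by
    intro s
    set a : ℝ → ℝ := fun u => quantile (μ v s) u - ∑ t, w t * quantile (μ v t) u with ha
    set b : ℝ → ℝ := fun u => quantile (μ v' s) u - ∑ t, w t * quantile (μ v' t) u with hb
    have hasm : AEStronglyMeasurable a (volume.restrict (Ioo (0:ℝ) 1)) :=
      (hQsm v hv s).sub (hGsm v hv)
    have hbsm : AEStronglyMeasurable b (volume.restrict (Ioo (0:ℝ) 1)) :=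
      (hQsm v' hv' s).sub (hGsm v' hv')
    have habd : ∀ u ∈ Ioo (0:ℝ) 1, |a u| ≤ 2 * M := by
      intro u hu
      calc |a u| ≤ |quantile (μ v s) u| + |∑ t, w t * quantile (μ v t) u| := abs_sub _ _
        _ ≤ 2 * M := by linarith [hQbd v hv s u hu, hGbd v hv u hu]
    have hbbd : ∀ u ∈ Ioo (0:ℝ) 1, |b u| ≤ 2 * M := by
      intro u hu
      calc |b u| ≤ |quantile (μ v' s) u| + |∑ t, w t * quantile (μ v' t) u| := abs_sub _ _
        _ ≤ 2 * M := by linarith [hQbd v' hv' s u hu, hGbd v' hv' u hu]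
    have ha2 : IntegrableOn (fun u => a u ^ 2) (Ioo (0:ℝ) 1) := by
      have : (fun u => a u ^ 2) = fun u => a u * a u := by ext u; ring
      rw [this]
      refine hint _ (hasm.mul hasm) ((2*M)*(2*M)) (fun u hu => ?_)
      rw [abs_mul]
      exact mul_le_mul (habd u hu) (habd u hu) (abs_nonneg _) (by positivity)
    have hb2 : IntegrableOn (fun u => b u ^ 2) (Ioo (0:ℝ) 1) := by
      have : (fun u => b u ^ 2) = fun u => b u * b u := by ext u; ring
      rw [this]
      refine hint _ (hbsm.mul hbsm) ((2*M)*(2*M)) (fun u hu => ?_)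
      rw [abs_mul]
      exact mul_le_mul (hbbd u hu) (hbbd u hu) (abs_nonneg _) (by positivity)
    have habs : IntegrableOn (fun u => |a u ^ 2 - b u ^ 2|) (Ioo (0:ℝ) 1) := (ha2.sub hb2).abs
    have hrhs : IntegrableOn
        (fun u => 4 * M * (|quantile (μ v s) u - quantile (μ v' s) u|
          + |(∑ t, w t * quantile (μ v t) u) - ∑ t, w t * quantile (μ v' t) u|))
        (Ioo (0:ℝ) 1) := (((hQint s).add hGint).const_mul (4 * M))
    calc |(∫ u in Ioo (0:ℝ) 1, a u ^ 2) - ∫ u in Ioo (0:ℝ) 1, b u ^ 2|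
        = |∫ u in Ioo (0:ℝ) 1, (a u ^ 2 - b u ^ 2)| := by rw [integral_sub ha2 hb2]
      _ ≤ ∫ u in Ioo (0:ℝ) 1, |a u ^ 2 - b u ^ 2| := by
          simpa [Real.norm_eq_abs] using
            norm_integral_le_integral_norm (μ := volume.restrict (Ioo (0:ℝ) 1))
              (fun u => a u ^ 2 - b u ^ 2)
      _ ≤ ∫ u in Ioo (0:ℝ) 1, 4 * M * (|quantile (μ v s) u - quantile (μ v' s) u|
            + |(∑ t, w t * quantile (μ v t) u) - ∑ t, w t * quantile (μ v' t) u|) := by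
          refine setIntegral_mono_on habs hrhs measurableSet_Ioo (fun u hu => ?_)
          have e1 : a u ^ 2 - b u ^ 2 = (a u - b u) * (a u + b u) := by ring
          have e2 : a u - b u = (quantile (μ v s) u - quantile (μ v' s) u)
              - ((∑ t, w t * quantile (μ v t) u) - ∑ t, w t * quantile (μ v' t) u) := by
            simp only [ha, hb]; ring
          have h4 : |a u + b u| ≤ 4 * M := by
            calc |a u + b u| ≤ |a u| + |b u| := abs_add_le _ _
              _ ≤ 4 * M := by linarith [habd u hu, hbbd u hu]
          have h5 : |a u - b u| ≤ |quantile (μ v s) u - quantile (μ v' s) u|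
              + |(∑ t, w t * quantile (μ v t) u) - ∑ t, w t * quantile (μ v' t) u| := by
            rw [e2]; exact abs_sub _ _
          calc |a u ^ 2 - b u ^ 2| = |a u - b u| * |a u + b u| := by rw [e1, abs_mul]
            _ ≤ (|quantile (μ v s) u - quantile (μ v' s) u|
                + |(∑ t, w t * quantile (μ v t) u) - ∑ t, w t * quantile (μ v' t) u|)
                * (4 * M) := mul_le_mul h5 h4 (abs_nonneg _) (by positivity)
            _ = 4 * M * (|quantile (μ v s) u - quantile (μ v' s) u|
                + |(∑ t, w t * quantile (μ v t) u) - ∑ t, w t * quantile (μ v' t) u|) := by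
                ring
      _ = 4 * M * ((∫ u in Ioo (0:ℝ) 1, |quantile (μ v s) u - quantile (μ v' s) u|)
            + ∫ u in Ioo (0:ℝ) 1,
              |(∑ t, w t * quantile (μ v t) u) - ∑ t, w t * quantile (μ v' t) u|) := by
          rw [integral_const_mul, integral_add (hQint s) hGint]
      _ ≤ 4 * M * (c + c) := by
          refine mul_le_mul_of_nonneg_left (add_le_add (hD s) hE) (by positivity)
      _ = 8 * M * c := by ring
  -- put everything together
  rw [hU v hv, hU v' hv']
  calc |(∑ s, w s * ∫ u in Ioo (0:ℝ) 1,
          (quantile (μ v s) u - ∑ t, w t * quantile (μ v t) u) ^ 2)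
        - ∑ s, w s * ∫ u in Ioo (0:ℝ) 1,
          (quantile (μ v' s) u - ∑ t, w t * quantile (μ v' t) u) ^ 2|
      = |∑ s, w s * ((∫ u in Ioo (0:ℝ) 1,
          (quantile (μ v s) u - ∑ t, w t * quantile (μ v t) u) ^ 2)
          - ∫ u in Ioo (0:ℝ) 1,
          (quantile (μ v' s) u - ∑ t, w t * quantile (μ v' t) u) ^ 2)| := by
        rw [← Finset.sum_sub_distrib]
        congr 1
        exact Finset.sum_congr rfl (fun s _ => by ring)
    _ ≤ ∑ s, |w s * ((∫ u in Ioo (0:ℝ) 1,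
          (quantile (μ v s) u - ∑ t, w t * quantile (μ v t) u) ^ 2)
          - ∫ u in Ioo (0:ℝ) 1,
          (quantile (μ v' s) u - ∑ t, w t * quantile (μ v' t) u) ^ 2)| :=
        Finset.abs_sum_le_sum_abs _ _
    _ ≤ ∑ s, w s * (8 * M * c) := by
        refine Finset.sum_le_sum (fun s _ => ?_)
        rw [abs_mul, abs_of_nonneg (hw s)]
        exact mul_le_mul_of_nonneg_left (hterm s) (hw s)
    _ = 8 * M * c := by rw [← Finset.sum_mul, hw1, one_mul]
    _ = 16 * M ^ 2 * Lcdf * |v - v'| := by rw [hc]; ring
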